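/- Define the function A_{i,ε}(t) piecewise by A = 1 for t ≤ i − 1/2, A(t) = E(t − i + 1/2) for i − 1/2 < t ≤ i − ε, and A(t) = E(t − i + 1/2)τ_{i−ε,i}(t) for t > i − ε, where E(t) = 1 + e^{−1/t} and τ_{a,b} is the standard smooth cutoff equal to 1 for t ≤ a and 0 for t ≥ b built from e^{1/t}/(e^{1/(1−t)}+e^{1/t}). If 0 < b − a < 1 the cutoff satisfies 0 ≥ τ_{a,b}² − τ_{a,b} ≥ τ'_{a,b}, and E satisfies E² ≥ E ≥ E' for t > 0; consequently B(a) := ∫₀ᵃ A dt satisfies (B')² − B'' = A² − A' ≥ 0, so the metric da² + e^{−2B(a)}(dx² + dy²) has ρ''(a) ≥ 0 for ρ(a) = e^{−B(a)} and hence nonpositive sectional curvatures K(∂_x,∂_y) = −(ρ'/ρ)², K(∂_a,∂_x) = K(∂_a,∂_y) = −ρ''/ρ. -/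

import Mathlib

noncomputable section

open Real Polynomial in
private lemma aux_sq_le_exp (u : ℝ) (hu : 0 ≤ u) : u ^ 2 ≤ Real.exp u := by
  have h := Real.add_one_le_exp (u / 4)
  have h2 : Real.exp u = Real.exp (u / 4) ^ 4 := by
    rw [← Real.exp_nat_mul]; congr 1; push_cast; ring
  have h3 : u ≤ (u / 4 + 1) ^ 2 := by nlinarith [sq_nonneg (u / 4 - 1)]
  have h4 : (0:ℝ) ≤ u / 4 + 1 := by linarith
  nlinarith [sq_nonneg (Real.exp (u/4) - (u/4+1)), sq_nonneg (Real.exp (u/4) + (u/4+1)),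
    Real.exp_pos (u/4), sq_nonneg (Real.exp (u/4) ^ 2 - u)]

open Real Polynomial in
private lemma aux_glue_le_sq (x : ℝ) : expNegInvGlue x ≤ x ^ 2 := by
  rcases le_or_gt x 0 with h | h
  · rw [expNegInvGlue.zero_of_nonpos h]; positivity
  · have hx : expNegInvGlue x = Real.exp (-x⁻¹) := by
      simp [expNegInvGlue, not_le.2 h]
    have h1 : (x⁻¹) ^ 2 ≤ Real.exp x⁻¹ := aux_sq_le_exp _ (by positivity)
    rw [hx, Real.exp_neg]
    rw [inv_le_comm₀ (Real.exp_pos _) (by positivity)]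
    calc (x ^ 2)⁻¹ = (x⁻¹) ^ 2 := by rw [inv_pow]
    _ ≤ Real.exp x⁻¹ := h1

open Real Polynomial in
private lemma aux_glue_div_sq_le_one (x : ℝ) : expNegInvGlue x / x ^ 2 ≤ 1 := by
  rcases eq_or_ne x 0 with rfl | h
  · simp
  · rw [div_le_one (by positivity)]; exact aux_glue_le_sq x

open Real Polynomial in
private lemma aux_glue_hasDerivAt (x : ℝ) :
    HasDerivAt expNegInvGlue (expNegInvGlue x / x ^ 2) x := by
  have h := expNegInvGlue.hasDerivAt_polynomial_eval_inv_mul 1 x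
  simp only [derivative_one, sub_zero, mul_one, eval_one, one_mul, eval_pow, eval_X] at h
  convert h using 1
  rw [div_eq_mul_inv, ← inv_pow, mul_comm]

open Real in
/-- Formula for the derivative of `Real.smoothTransition`. -/
private def Tder (x : ℝ) : ℝ :=
  (expNegInvGlue x / x ^ 2 * expNegInvGlue (1 - x)
    + expNegInvGlue x * (expNegInvGlue (1 - x) / (1 - x) ^ 2))
  / (expNegInvGlue x + expNegInvGlue (1 - x)) ^ 2

open Real in
private lemma aux_T_hasDerivAt (x : ℝ) : HasDerivAt Real.smoothTransition (Tder x) x := by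
  have h1 := aux_glue_hasDerivAt x
  have hinner : HasDerivAt (fun y : ℝ => 1 - y) (-1) x := (hasDerivAt_id x).const_sub 1
  have h2 : HasDerivAt (fun y : ℝ => expNegInvGlue (1 - y))
      (expNegInvGlue (1 - x) / (1 - x) ^ 2 * (-1)) x :=
    (aux_glue_hasDerivAt (1 - x)).comp x hinner
  have hd : HasDerivAt (fun y : ℝ => expNegInvGlue y + expNegInvGlue (1 - y))
      (expNegInvGlue x / x ^ 2 + expNegInvGlue (1 - x) / (1 - x) ^ 2 * (-1)) x := h1.add h2
  have hne : expNegInvGlue x + expNegInvGlue (1 - x) ≠ 0 :=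
    (Real.smoothTransition.pos_denom x).ne'
  have hT := h1.div hd hne
  have heq : Tder x = (expNegInvGlue x / x ^ 2 * (expNegInvGlue x + expNegInvGlue (1 - x))
      - expNegInvGlue x * (expNegInvGlue x / x ^ 2 + expNegInvGlue (1 - x) / (1 - x) ^ 2 * (-1)))
      / (expNegInvGlue x + expNegInvGlue (1 - x)) ^ 2 := by
    unfold Tder
    congr 1
    ring
  rw [heq]
  exact hT

open Real in
private lemma aux_Tder_nonneg (x : ℝ) : 0 ≤ Tder x := by
  unfold Tder
  have g1 := expNegInvGlue.nonneg x
  have g2 := expNegInvGlue.nonneg (1 - x)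
  have h1 : (0:ℝ) ≤ expNegInvGlue x / x ^ 2 := by positivity
  have h2 : (0:ℝ) ≤ expNegInvGlue (1 - x) / (1 - x) ^ 2 := by positivity
  positivity

open Real in
private lemma aux_T_sub_sq (x : ℝ) :
    Real.smoothTransition x - Real.smoothTransition x ^ 2
      = expNegInvGlue x * expNegInvGlue (1 - x)
        / (expNegInvGlue x + expNegInvGlue (1 - x)) ^ 2 := by
  have hne : expNegInvGlue x + expNegInvGlue (1 - x) ≠ 0 :=
    (Real.smoothTransition.pos_denom x).ne'
  simp only [Real.smoothTransition]
  field_simp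
  ring

open Real in
private lemma aux_Tder_ge (x : ℝ) :
    Real.smoothTransition x - Real.smoothTransition x ^ 2 ≤ Tder x := by
  rw [aux_T_sub_sq]
  unfold Tder
  have hd := Real.smoothTransition.pos_denom x
  rw [div_le_div_iff_of_pos_right (by positivity)]
  rcases le_or_gt x 0 with h | h
  · rw [expNegInvGlue.zero_of_nonpos h]; simp
  rcases le_or_gt 1 x with h' | h'
  · rw [expNegInvGlue.zero_of_nonpos (by linarith : 1 - x ≤ 0)]; simp
  have hx2 : x ^ 2 ≤ 1 := by nlinarith
  have h1 : expNegInvGlue x ≤ expNegInvGlue x / x ^ 2 := by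
    rw [le_div_iff₀ (by positivity)]
    nlinarith [expNegInvGlue.nonneg x]
  calc expNegInvGlue x * expNegInvGlue (1 - x)
      ≤ expNegInvGlue x / x ^ 2 * expNegInvGlue (1 - x) :=
        mul_le_mul_of_nonneg_right h1 (expNegInvGlue.nonneg _)
    _ ≤ _ := le_add_of_nonneg_right
        (mul_nonneg (expNegInvGlue.nonneg _)
          (div_nonneg (expNegInvGlue.nonneg _) (sq_nonneg _)))

/-- The standard smooth cutoff `τ₀₁`, equal to `1` for `t ≤ 0` and `0` for `t ≥ 1`. -/
def tau01 (t : ℝ) : ℝ :=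
  if t ≤ 0 then 1
  else if 1 ≤ t then 0
  else Real.exp (1 / t) / (Real.exp (1 / (1 - t)) + Real.exp (1 / t))

/-- The rescaled cutoff `τ_{a,b}(t) = τ₀₁((t − a)/(b − a))`. -/
def tauab (a b t : ℝ) : ℝ := tau01 ((t - a) / (b - a))

/-- `E(t) = 1 + e^{−1/t}` for `t > 0` (extended by the same formula). -/
def Efun (t : ℝ) : ℝ := 1 + Real.exp (-1 / t)

/-- The interpolating function `A_{i,ε}`. -/
def Afun (i ε t : ℝ) : ℝ :=
  if t ≤ i - 1 / 2 then 1
  else if t ≤ i - ε then Efun (t - i + 1 / 2)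
  else Efun (t - i + 1 / 2) * tauab (i - ε) i t

/-- `B_{i,ε}(a) = ∫₀ᵃ A_{i,ε}(t) dt`. -/
def Bfun (i ε a : ℝ) : ℝ := ∫ t in (0:ℝ)..a, Afun i ε t

/-- The warping function `ρ_{i,ε}(a) = e^{−B_{i,ε}(a)}`. -/
def rhoFun (i ε a : ℝ) : ℝ := Real.exp (-(Bfun i ε a))

open Real in
private lemma tau01_eq (t : ℝ) : tau01 t = Real.smoothTransition (1 - t) := by
  unfold tau01
  rcases le_or_gt t 0 with h | h
  · rw [if_pos h, Real.smoothTransition.one_of_one_le (by linarith)]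
  rcases le_or_gt 1 t with h' | h'
  · rw [if_neg (by linarith), if_pos h', Real.smoothTransition.zero_of_nonpos (by linarith)]
  rw [if_neg (by linarith), if_neg (by linarith)]
  have h1 : expNegInvGlue (1 - t) = Real.exp (-(1 - t)⁻¹) := by
    simp [expNegInvGlue, not_le.2 (by linarith : (0:ℝ) < 1 - t)]
  have h2 : expNegInvGlue (1 - (1 - t)) = Real.exp (-t⁻¹) := by
    simp only [sub_sub_cancel]
    simp [expNegInvGlue, not_le.2 h]
  rw [Real.smoothTransition, h1, h2]
  rw [Real.exp_neg, Real.exp_neg, one_div, one_div]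
  have e1 : Real.exp (1 - t)⁻¹ > 0 := Real.exp_pos _
  have e2 : Real.exp t⁻¹ > 0 := Real.exp_pos _
  field_simp
  ring

open Real in
private lemma Efun_eq {s : ℝ} (hs : 0 < s) : Efun s = 1 + expNegInvGlue s := by
  simp [Efun, expNegInvGlue, not_le.2 hs, neg_div, one_div]

open Real in
private lemma Afun_eq (i ε : ℝ) (hε0 : 0 < ε) (hε2 : ε ≤ 1 / 2) :
    Afun i ε = fun t =>
      (1 + expNegInvGlue (t - i + 1 / 2)) * Real.smoothTransition ((i - t) / ε) := by
  funext t
  unfold Afun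
  rcases le_or_gt t (i - 1/2) with h | h
  · rw [if_pos h, expNegInvGlue.zero_of_nonpos (by linarith),
      Real.smoothTransition.one_of_one_le (by rw [le_div_iff₀ hε0]; linarith)]
    norm_num
  rcases le_or_gt t (i - ε) with h' | h'
  · rw [if_neg (not_le.2 h), if_pos h', Efun_eq (by linarith),
      Real.smoothTransition.one_of_one_le (by rw [le_div_iff₀ hε0]; linarith)]
    norm_num
  · rw [if_neg (not_le.2 h), if_neg (not_le.2 h'), Efun_eq (by linarith)]
    unfold tauab
    rw [tau01_eq]
    have h2 : i - (i - ε) = ε := by ring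
    have harg : 1 - (t - (i - ε)) / (i - (i - ε)) = (i - t) / ε := by
      rw [h2]; field_simp; ring
    rw [harg]

open Real in
/-- Derivative of `Afun` (in product form). -/
private def Ader (i ε x : ℝ) : ℝ :=
  expNegInvGlue (x - i + 1/2) / (x - i + 1/2) ^ 2 * Real.smoothTransition ((i - x) / ε)
  + (1 + expNegInvGlue (x - i + 1/2)) * (Tder ((i - x) / ε) * (-1 / ε))

open Real in
private lemma Afun_hasDerivAt (i ε : ℝ) (hε0 : 0 < ε) (hε2 : ε ≤ 1 / 2) (x : ℝ) :
    HasDerivAt (Afun i ε) (Ader i ε x) x := by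
  rw [Afun_eq i ε hε0 hε2]
  have hP : HasDerivAt (fun t : ℝ => 1 + expNegInvGlue (t - i + 1/2))
      (expNegInvGlue (x - i + 1/2) / (x - i + 1/2) ^ 2) x := by
    have hin : HasDerivAt (fun t : ℝ => t - i + 1/2) 1 x :=
      ((hasDerivAt_id x).sub_const i).add_const (1/2)
    simpa using ((aux_glue_hasDerivAt (x - i + 1/2)).comp x hin).const_add 1
  have hQ : HasDerivAt (fun t : ℝ => Real.smoothTransition ((i - t) / ε))
      (Tder ((i - x) / ε) * (-1 / ε)) x := by
    have hin : HasDerivAt (fun t : ℝ => (i - t) / ε) (-1 / ε) x := by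
      simpa [neg_div] using ((hasDerivAt_id x).const_sub i).div_const ε
    exact (aux_T_hasDerivAt ((i - x) / ε)).comp x hin
  exact hP.mul hQ

open Real in
private lemma Afun_key (i ε : ℝ) (hε0 : 0 < ε) (hε1 : ε < 1) (hε2 : ε ≤ 1 / 2) (t : ℝ) :
    0 ≤ Afun i ε t ^ 2 - Ader i ε t := by
  have he := congrFun (Afun_eq i ε hε0 hε2) t
  rw [he]
  unfold Ader
  set s : ℝ := t - i + 1/2 with hs
  set u : ℝ := (i - t) / ε with hu
  set F : ℝ := expNegInvGlue s with hF
  set Q : ℝ := Real.smoothTransition u with hQ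
  set p' : ℝ := F / s ^ 2 with hp'
  set D : ℝ := Tder u with hD
  have hF0 : 0 ≤ F := expNegInvGlue.nonneg s
  have hp0 : 0 ≤ p' := div_nonneg hF0 (sq_nonneg _)
  have hp1 : p' ≤ 1 := aux_glue_div_sq_le_one s
  have hQ0 : 0 ≤ Q := Real.smoothTransition.nonneg u
  have hQ1 : Q ≤ 1 := Real.smoothTransition.le_one u
  have hD0 : 0 ≤ D := aux_Tder_nonneg u
  have hDge : Q - Q ^ 2 ≤ D := aux_Tder_ge u
  have hinv : 1 ≤ 1 / ε := by rw [le_div_iff₀ hε0]; linarith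
  have h2 : (1 + F) * D * 1 ≤ (1 + F) * D * (1 / ε) :=
    mul_le_mul_of_nonneg_left hinv (by positivity)
  have h3 : (1 + F) * (Q - Q ^ 2) ≤ (1 + F) * D :=
    mul_le_mul_of_nonneg_left hDge (by positivity)
  have h4 : p' * Q ≤ (1 + F) * Q :=
    mul_le_mul_of_nonneg_right (by linarith) hQ0
  have h5 : 0 ≤ (1 + F) * Q ^ 2 * F := by positivity
  have hgoal : (1 + F) * (D * (-1 / ε)) = -((1 + F) * D * (1 / ε)) := by ring
  rw [hgoal]
  generalize (1:ℝ)/ε = e at h2 ⊢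
  linarith [h2, h3, h4, h5]

/-- Properties of the interpolation: for `0 < b − a < 1` the cutoff satisfies
`0 ≥ τ² − τ ≥ τ'`; `E` satisfies `E² ≥ E ≥ E'` for `t > 0`; consequently
`A² − A' ≥ 0`, so `B = ∫₀· A` satisfies `(B')² − B'' ≥ 0`, whence `ρ = e^{−B}` has
`ρ'' ≥ 0` and the warped metric `da² + e^{−2B}(dx² + dy²)` has nonpositive sectional
curvatures `K(∂_x,∂_y) = −(ρ'/ρ)² ≤ 0` and `K(∂_a,∂_x) = K(∂_a,∂_y) = −ρ''/ρ ≤ 0`. -/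
theorem interpolation_gives_nonpositive_curvature
    (a b : ℝ) (hab : 0 < b - a) (hab1 : b - a < 1)
    (i ε : ℝ) (hε0 : 0 < ε) (hε1 : ε < 1) (hε2 : ε ≤ 1 / 2) :
    (∀ t, tauab a b t ^ 2 - tauab a b t ≤ 0
        ∧ deriv (tauab a b) t ≤ tauab a b t ^ 2 - tauab a b t)
    ∧ (∀ t, 0 < t → Efun t ≤ Efun t ^ 2 ∧ deriv Efun t ≤ Efun t)
    ∧ (∀ t, 0 ≤ Afun i ε t ^ 2 - deriv (Afun i ε) t)
    ∧ (∀ x, 0 ≤ deriv (fun y => Bfun i ε y) x ^ 2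
          - deriv (deriv fun y => Bfun i ε y) x)
    ∧ (∀ x, 0 ≤ deriv (deriv fun y => rhoFun i ε y) x
        ∧ -((deriv (fun y => rhoFun i ε y) x / rhoFun i ε x) ^ 2) ≤ 0
        ∧ -(deriv (deriv fun y => rhoFun i ε y) x / rhoFun i ε x) ≤ 0) := by
  have htau : tauab a b = fun s => Real.smoothTransition (1 - (s - a) / (b - a)) :=
    funext fun s => tau01_eq _
  -- Part 3 prerequisites
  have hA3 : ∀ t, 0 ≤ Afun i ε t ^ 2 - deriv (Afun i ε) t := by
    intro t
    rw [(Afun_hasDerivAt i ε hε0 hε2 t).deriv]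
    exact Afun_key i ε hε0 hε1 hε2 t
  have hAcont : Continuous (Afun i ε) := by
    rw [Afun_eq i ε hε0 hε2]
    exact (continuous_const.add ((expNegInvGlue.contDiff (n := 0)).continuous.comp
      (by continuity))).mul (Real.smoothTransition.continuous.comp (by continuity))
  have hB : ∀ x, HasDerivAt (fun y => Bfun i ε y) (Afun i ε x) x := fun x =>
    (hAcont.integral_hasStrictDerivAt 0 x).hasDerivAt
  have hdB : deriv (fun y => Bfun i ε y) = Afun i ε := funext fun x => (hB x).deriv
  refine ⟨?_, ?_, hA3, ?_, ?_⟩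
  · -- cutoff inequalities
    intro t
    set u : ℝ := 1 - (t - a) / (b - a) with hu
    have hin : HasDerivAt (fun s : ℝ => 1 - (s - a) / (b - a)) (-(1 / (b - a))) t := by
      simpa using (((hasDerivAt_id t).sub_const a).div_const (b - a)).const_sub 1
    have hder : HasDerivAt (fun s => Real.smoothTransition (1 - (s - a) / (b - a)))
        (Tder u * -(1 / (b - a))) t := by
      have := (aux_T_hasDerivAt u).comp t hin; exact this
    have h0 := aux_Tder_nonneg u
    have hge := aux_Tder_ge u
    have hQ0 := Real.smoothTransition.nonneg u
    have hQ1 := Real.smoothTransition.le_one u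
    simp only [htau]
    constructor
    · nlinarith
    · rw [hder.deriv]
      have hba : 1 ≤ 1 / (b - a) := by rw [le_div_iff₀ hab]; linarith
      have hk : Tder u * 1 ≤ Tder u * (1 / (b - a)) := mul_le_mul_of_nonneg_left hba h0
      have key : Tder u * -(1 / (b - a)) = -(Tder u * (1 / (b - a))) := by ring
      rw [key]
      linarith
  · -- E inequalities
    intro t ht
    have hE1 : 1 ≤ Efun t := by
      have := Real.exp_pos (-1 / t)
      simp only [Efun]; linarith
    refine ⟨by nlinarith, ?_⟩
    have hfe : Efun = fun y : ℝ => 1 + Real.exp (-y⁻¹) := by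
      funext y; simp [Efun, neg_div, one_div]
    have hd : HasDerivAt (fun y : ℝ => 1 + Real.exp (-y⁻¹))
        (Real.exp (-t⁻¹) * (t ^ 2)⁻¹) t := by
      simpa using (((hasDerivAt_inv ht.ne').neg).exp).const_add 1
    rw [hfe, hd.deriv]
    have hglue : expNegInvGlue t = Real.exp (-t⁻¹) := by
      simp [expNegInvGlue, not_le.2 ht]
    have hb : Real.exp (-t⁻¹) * (t ^ 2)⁻¹ ≤ 1 := by
      rw [← hglue, ← div_eq_mul_inv]
      exact aux_glue_div_sq_le_one t
    have := Real.exp_pos (-(t:ℝ)⁻¹)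
    simp only [Efun] at hE1 ⊢
    linarith
  · -- B inequalities
    intro x
    rw [hdB, (Afun_hasDerivAt i ε hε0 hε2 x).deriv]
    exact Afun_key i ε hε0 hε1 hε2 x
  · -- rho inequalities
    intro x
    have hρ : ∀ y, HasDerivAt (fun z => rhoFun i ε z)
        (Real.exp (-(Bfun i ε y)) * -(Afun i ε y)) y := fun y => ((hB y).neg).exp
    have hdρ : deriv (fun y => rhoFun i ε y)
        = fun y => Real.exp (-(Bfun i ε y)) * -(Afun i ε y) :=
      funext fun y => (hρ y).deriv
    have h2ρ : HasDerivAt (fun y => Real.exp (-(Bfun i ε y)) * -(Afun i ε y))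
        (Real.exp (-(Bfun i ε x)) * -(Afun i ε x) * -(Afun i ε x)
          + Real.exp (-(Bfun i ε x)) * -(Ader i ε x)) x :=
      ((hB x).neg.exp).mul (Afun_hasDerivAt i ε hε0 hε2 x).neg
    have hd2 : deriv (deriv fun y => rhoFun i ε y) x
        = Real.exp (-(Bfun i ε x)) * -(Afun i ε x) * -(Afun i ε x)
          + Real.exp (-(Bfun i ε x)) * -(Ader i ε x) := by
      rw [hdρ]; exact h2ρ.deriv
    have hk' := Afun_key i ε hε0 hε1 hε2 x
    have h1 : 0 ≤ deriv (deriv fun y => rhoFun i ε y) x := by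
      rw [hd2]
      nlinarith [Real.exp_pos (-(Bfun i ε x)),
        mul_nonneg (Real.exp_pos (-(Bfun i ε x))).le hk']
    exact ⟨h1, neg_nonpos.2 (sq_nonneg _),
      neg_nonpos.2 (div_nonneg h1 (Real.exp_pos _).le)⟩
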